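/- Let a, b ∈ ℝ with b ≥ 0. If the matrix p(α,1) = [[α²+b, (a/2)α],[(a/2)α, (α²+1)/4]] is positive semidefinite for every real α, then for every complex z = α + iβ the Hermitian matrix p(z,1) = [[|z|²+b, (a/2)Re(z)],[(a/2)Re(z), (|z|²+1)/4]] is positive semidefinite. -/

import Mathlib

open ComplexOrder

private lemma quad_aux (A C D p q r s : ℝ) (hA : 0 ≤ A) (hD : 0 < D)
    (hK : C ^ 2 ≤ A * D) :
    0 ≤ A * (p ^ 2 + q ^ 2) + 2 * C * (p * r + q * s) + D * (r ^ 2 + s ^ 2) := by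
  nlinarith [sq_nonneg (C * p + D * r), sq_nonneg (C * q + D * s),
    mul_le_mul_of_nonneg_left hK (by positivity : (0:ℝ) ≤ p ^ 2 + q ^ 2),
    mul_pos hD hD, sq_nonneg p, sq_nonneg q, sq_nonneg r, sq_nonneg s]

theorem psd_real_line_implies_psd_complex (a b : ℝ) (hb : 0 ≤ b)
    (h : ∀ α : ℝ, Matrix.PosSemidef
      (!![α ^ 2 + b, (a / 2) * α; (a / 2) * α, (α ^ 2 + 1) / 4] :
        Matrix (Fin 2) (Fin 2) ℝ)) :
    ∀ z : ℂ, Matrix.PosSemidef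
      (!![((‖z‖ ^ 2 + b : ℝ) : ℂ), (((a / 2) * z.re : ℝ) : ℂ);
          (((a / 2) * z.re : ℝ) : ℂ), (((‖z‖ ^ 2 + 1) / 4 : ℝ) : ℂ)] :
        Matrix (Fin 2) (Fin 2) ℂ) := by
  intro z
  have hre : z.re ^ 2 ≤ ‖z‖ ^ 2 := by
    have h1 := Complex.abs_re_le_norm z
    have h2 := norm_nonneg z
    nlinarith [abs_nonneg z.re, le_abs_self z.re, neg_abs_le z.re]
  have hAnn : (0:ℝ) ≤ ‖z‖ ^ 2 + b := by positivity
  have hDpos : (0:ℝ) < (‖z‖ ^ 2 + 1) / 4 := by positivity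
  -- determinant inequality from the quadratic form of the real matrix
  have hq := (h (‖z‖)).dotProduct_mulVec_nonneg ![(‖z‖ ^ 2 + 1) / 4, -(a / 2 * ‖z‖)]
  simp [dotProduct, Matrix.mulVec, Fin.sum_univ_two] at hq
  have h1 : (0:ℝ) ≤ ((‖z‖ ^ 2 + 1) / 4) *
      ((‖z‖ ^ 2 + b) * ((‖z‖ ^ 2 + 1) / 4)
        - (a / 2 * ‖z‖) ^ 2) := by nlinarith [hq]
  have h2 : (a / 2 * ‖z‖) ^ 2 ≤
      (‖z‖ ^ 2 + b) * ((‖z‖ ^ 2 + 1) / 4) := by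
    nlinarith [h1, hDpos]
  have hkey : ((a / 2) * z.re) ^ 2 ≤
      (‖z‖ ^ 2 + b) * ((‖z‖ ^ 2 + 1) / 4) := by
    nlinarith [mul_le_mul_of_nonneg_left hre (sq_nonneg (a / 2)), h2]
  refine Matrix.PosSemidef.of_dotProduct_mulVec_nonneg ?_ ?_
  · ext i j
    fin_cases i <;> fin_cases j <;> simp [Matrix.conjTranspose_apply]
  · intro x
    have key := quad_aux (‖z‖ ^ 2 + b) ((a / 2) * z.re)
      ((‖z‖ ^ 2 + 1) / 4) (x 0).re (x 0).im (x 1).re (x 1).im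
      hAnn hDpos hkey
    rw [Complex.le_def]
    constructor
    · simp [dotProduct, Matrix.mulVec, Fin.sum_univ_two,
        Complex.add_re, Complex.mul_re, Complex.add_im, Complex.mul_im, ← Complex.ofReal_pow]
      nlinarith [key]
    · simp [dotProduct, Matrix.mulVec, Fin.sum_univ_two,
        Complex.add_re, Complex.mul_re, Complex.add_im, Complex.mul_im, ← Complex.ofReal_pow]
      ring
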